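/- (Chain decomposition of a Gaussian binomial) For non-negative integers m, ℓ_1, …, ℓ_t, one has q^m · qbinom(m + ℓ_1 + ⋯ + ℓ_t − 1, m) = q^m · Σ over chains 0 = x_0 ≤ x_1 ≤ ⋯ ≤ x_t = m of Π_{r=1}^{t} q^{ℓ_r x_{r−1}} · qbinom(x_r − x_{r−1} + ℓ_r − 1, x_r − x_{r−1}), with the convention qbinom(−1, 0) = 1. -/

import Mathlib

/-- The finite q-Pochhammer symbol `(q;q)_N = Π_{j=1}^{N} (1 − q^j)` as a formal power
series in `q` over `ℚ`. -/
noncomputable def qp (N : ℕ) : PowerSeries ℚ :=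
  ∏ j ∈ Finset.Icc 1 N, (1 - (PowerSeries.X : PowerSeries ℚ) ^ j)

/-- The Gaussian binomial coefficient `qbinom n k = (q;q)_n / ((q;q)_k (q;q)_{n−k})`,
equal to `0` when `k > n`.  Note that truncated subtraction on `ℕ` realizes the
convention `qbinom(−1, 0) = 1`: arguments of the form `c − 1` with `c = 0` give
`qbinom 0 0 = 1`. -/
noncomputable def qbinom (n k : ℕ) : PowerSeries ℚ :=
  if k ≤ n then qp n * (qp k)⁻¹ * (qp (n - k))⁻¹ else 0

lemma qp_zero : qp 0 = 1 := by simp [qp]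

lemma qp_succ (N : ℕ) : qp (N + 1) = qp N * (1 - PowerSeries.X ^ (N + 1)) := by
  rw [qp, qp, Finset.prod_Icc_succ_top (by omega)]

lemma constantCoeff_qp (N : ℕ) : PowerSeries.constantCoeff (qp N) = 1 := by
  rw [qp, map_prod]
  apply Finset.prod_eq_one
  intro j hj
  simp only [Finset.mem_Icc] at hj
  simp [zero_pow (by omega : j ≠ 0)]

lemma qp_mul_inv (N : ℕ) : qp N * (qp N)⁻¹ = 1 :=
  PowerSeries.mul_inv_cancel _ (by rw [constantCoeff_qp]; norm_num)

lemma qp_ne_zero (N : ℕ) : qp N ≠ 0 := by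
  intro h
  have := constantCoeff_qp N
  rw [h, map_zero] at this
  norm_num at this

lemma qbinom_zero_right (n : ℕ) : qbinom n 0 = 1 := by
  rw [qbinom, if_pos (Nat.zero_le n)]
  simp [qp_zero, Nat.sub_zero]
  exact qp_mul_inv n

lemma qbinom_self (n : ℕ) : qbinom n n = 1 := by
  rw [qbinom, if_pos le_rfl, Nat.sub_self, qp_zero, inv_one, mul_one, qp_mul_inv]

lemma qbinom_eq_zero {n k : ℕ} (h : n < k) : qbinom n k = 0 := by
  rw [qbinom, if_neg (by omega)]

lemma qp_mul_qbinom {n k : ℕ} (h : k ≤ n) : qp k * qp (n - k) * qbinom n k = qp n := by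
  rw [qbinom, if_pos h]
  have h1 := qp_mul_inv k
  have h2 := qp_mul_inv (n - k)
  calc qp k * qp (n - k) * (qp n * (qp k)⁻¹ * (qp (n - k))⁻¹)
      = qp n * (qp k * (qp k)⁻¹) * (qp (n - k) * (qp (n - k))⁻¹) := by ring
    _ = qp n := by rw [h1, h2, mul_one, mul_one]

lemma qbinom_pascal {n k : ℕ} (hk : 1 ≤ k) (hkn : k ≤ n) :
    qbinom n k = qbinom (n - 1) (k - 1) +
      (PowerSeries.X : PowerSeries ℚ) ^ k * qbinom (n - 1) k := by
  rcases eq_or_lt_of_le hkn with rfl | hlt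
  · have h1 : qbinom (k - 1) k = 0 := qbinom_eq_zero (by omega)
    rw [qbinom_self, qbinom_self, h1, mul_zero, add_zero]
  · -- 1 ≤ k < n
    have e1 : k - 1 + 1 = k := by omega
    have e2 : n - k - 1 + 1 = n - k := by omega
    have e3 : n - 1 + 1 = n := by omega
    have e4 : n - 1 - (k - 1) = n - k := by omega
    have e5 : n - 1 - k = n - k - 1 := by omega
    have hk1 : qp k = qp (k - 1) * (1 - PowerSeries.X ^ k) := by
      conv_lhs => rw [← e1, qp_succ, e1]
    have hk2 : qp (n - k) = qp (n - k - 1) * (1 - PowerSeries.X ^ (n - k)) := by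
      conv_lhs => rw [← e2, qp_succ, e2]
    have hn : qp n = qp (n - 1) * (1 - PowerSeries.X ^ n) := by
      conv_lhs => rw [← e3, qp_succ, e3]
    have hX : (PowerSeries.X : PowerSeries ℚ) ^ k * PowerSeries.X ^ (n - k)
        = PowerSeries.X ^ n := by
      rw [← pow_add]; congr 1; omega
    have A := qp_mul_qbinom (show k - 1 ≤ n - 1 by omega)
    rw [e4] at A
    have B := qp_mul_qbinom (show k ≤ n - 1 by omega)
    rw [e5] at B
    apply mul_left_cancel₀ (mul_ne_zero (qp_ne_zero k) (qp_ne_zero (n - k)))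
    rw [qp_mul_qbinom hkn]
    rw [hk1, hk2, hn] at *
    linear_combination (-(1 - (PowerSeries.X : PowerSeries ℚ)^k)) * A -
      (PowerSeries.X : PowerSeries ℚ)^k * (1 - PowerSeries.X^(n-k)) * B +
      qp (n-1) * hX

lemma qvandermonde (a b m : ℕ) :
    ∑ k ∈ Finset.range (m + 1),
      (PowerSeries.X : PowerSeries ℚ) ^ (b * k) * qbinom (k + a - 1) k *
        qbinom (m - k + b - 1) (m - k)
      = qbinom (m + a + b - 1) m := by
  induction b generalizing m with
  | zero =>
    rw [Finset.sum_range_succ]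
    have h0 : ∑ k ∈ Finset.range m,
        (PowerSeries.X : PowerSeries ℚ) ^ (0 * k) * qbinom (k + a - 1) k *
          qbinom (m - k + 0 - 1) (m - k) = 0 :=
      Finset.sum_eq_zero fun k hk => by
        rw [Finset.mem_range] at hk
        rw [qbinom_eq_zero (show m - k + 0 - 1 < m - k by omega), mul_zero]
    rw [h0, zero_add, Nat.sub_self]
    simp [qbinom_zero_right]
  | succ b ihb =>
    induction m with
    | zero => simp [qbinom_zero_right]
    | succ m ihm =>
      rw [Finset.sum_range_succ]
      have split : ∀ k ∈ Finset.range (m + 1),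
          (PowerSeries.X : PowerSeries ℚ) ^ ((b + 1) * k) * qbinom (k + a - 1) k *
            qbinom (m + 1 - k + (b + 1) - 1) (m + 1 - k)
          = (PowerSeries.X : PowerSeries ℚ) ^ ((b + 1) * k) * qbinom (k + a - 1) k *
              qbinom (m - k + (b + 1) - 1) (m - k)
            + (PowerSeries.X : PowerSeries ℚ) ^ (m + 1) *
              ((PowerSeries.X : PowerSeries ℚ) ^ (b * k) * qbinom (k + a - 1) k *
                qbinom (m + 1 - k + b - 1) (m + 1 - k)) := by
        intro k hk
        rw [Finset.mem_range] at hk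
        have hkm : k ≤ m := by omega
        rw [show m + 1 - k + (b + 1) - 1 = m + 1 - k + b from by omega]
        have hp := qbinom_pascal (show (1:ℕ) ≤ m + 1 - k by omega)
          (show m + 1 - k ≤ m + 1 - k + b by omega)
        rw [show m + 1 - k + b - 1 = m - k + b from by omega,
          show m + 1 - k - 1 = m - k from by omega] at hp
        rw [hp, mul_add]
        congr 1
        rw [show m + 1 - k + b - 1 = m - k + b from by omega]
        have hpow : (PowerSeries.X : PowerSeries ℚ) ^ ((b + 1) * k) *
            (PowerSeries.X : PowerSeries ℚ) ^ (m + 1 - k)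
            = (PowerSeries.X : PowerSeries ℚ) ^ (m + 1) *
              (PowerSeries.X : PowerSeries ℚ) ^ (b * k) := by
          rw [← pow_add, ← pow_add]
          congr 1
          have : (b + 1) * k = b * k + k := by ring
          omega
        calc (PowerSeries.X : PowerSeries ℚ) ^ ((b + 1) * k) * qbinom (k + a - 1) k *
              ((PowerSeries.X : PowerSeries ℚ) ^ (m + 1 - k) * qbinom (m - k + b) (m + 1 - k))
            = ((PowerSeries.X : PowerSeries ℚ) ^ ((b + 1) * k) *
                (PowerSeries.X : PowerSeries ℚ) ^ (m + 1 - k)) *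
                (qbinom (k + a - 1) k * qbinom (m - k + b) (m + 1 - k)) := by ring
          _ = _ := by rw [hpow]; ring
      rw [Finset.sum_congr rfl split, Finset.sum_add_distrib, ihm, ← Finset.mul_sum]
      have hb := ihb (m + 1)
      rw [Finset.sum_range_succ] at hb
      simp only [Nat.sub_self, Nat.zero_add, qbinom_zero_right, mul_one] at hb
      have hsum : ∑ k ∈ Finset.range (m + 1),
          (PowerSeries.X : PowerSeries ℚ) ^ (b * k) * qbinom (k + a - 1) k *
            qbinom (m + 1 - k + b - 1) (m + 1 - k)
          = qbinom (m + 1 + a + b - 1) (m + 1) -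
            (PowerSeries.X : PowerSeries ℚ) ^ (b * (m + 1)) * qbinom (m + 1 + a - 1) (m + 1) := by
        linear_combination hb
      rw [hsum]
      rw [show m + 1 - (m + 1) + (b + 1) - 1 = b from by omega, Nat.sub_self,
        qbinom_zero_right, mul_one]
      have hP := qbinom_pascal (show (1:ℕ) ≤ m + 1 by omega)
        (show m + 1 ≤ m + 1 + a + (b + 1) - 1 by omega)
      rw [show m + 1 + a + (b + 1) - 1 - 1 = m + a + b from by omega,
        show m + 1 - 1 = m from by omega] at hP
      rw [show m + a + (b + 1) - 1 = m + a + b from by omega,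
        show m + 1 + a + b - 1 = m + a + b from by omega,
        show (b + 1) * (m + 1) = m + 1 + b * (m + 1) from by ring, pow_add, hP]
      ring

lemma chain_sum (t : ℕ) : ∀ (ℓ : Fin t → ℕ) (m : ℕ),
    (∑ x ∈ (Fintype.piFinset fun _ : Fin (t + 1) => Finset.range (m + 1)).filter
        (fun x => (∀ r : Fin t, x r.castSucc ≤ x r.succ) ∧ x 0 = 0 ∧ x (Fin.last t) = m),
      ∏ r : Fin t,
        (PowerSeries.X : PowerSeries ℚ) ^ (ℓ r * x r.castSucc) *
          qbinom (x r.succ - x r.castSucc + ℓ r - 1) (x r.succ - x r.castSucc))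
    = qbinom (m + ∑ r, ℓ r - 1) m := by
  induction t with
  | zero =>
    intro ℓ m
    have hsum0 : ∑ r : Fin 0, ℓ r = 0 := rfl
    rcases Nat.eq_zero_or_pos m with rfl | hm
    · have hset : (Fintype.piFinset fun _ : Fin 1 => Finset.range (0 + 1)).filter
          (fun x => (∀ r : Fin 0, x r.castSucc ≤ x r.succ) ∧ x 0 = 0 ∧ x (Fin.last 0) = 0)
          = {fun _ => 0} := by
        ext x
        simp only [Finset.mem_filter, Fintype.mem_piFinset, Finset.mem_range,
          Finset.mem_singleton]
        constructor
        · rintro ⟨-, -, h0, -⟩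
          funext i
          have hi : i = 0 := Subsingleton.elim _ _
          rw [hi, h0]
        · rintro rfl
          exact ⟨fun i => by simp, fun r => r.elim0, rfl, rfl⟩
      rw [hset, Finset.sum_singleton]
      simp [hsum0, qbinom_zero_right]
    · have hset : (Fintype.piFinset fun _ : Fin 1 => Finset.range (m + 1)).filter
          (fun x => (∀ r : Fin 0, x r.castSucc ≤ x r.succ) ∧ x 0 = 0 ∧ x (Fin.last 0) = m)
          = ∅ := by
        rw [Finset.filter_eq_empty_iff]
        rintro x - ⟨-, h0, hl⟩
        rw [show Fin.last 0 = 0 from rfl, h0] at hl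
        omega
      rw [hset, Finset.sum_empty, hsum0]
      exact (qbinom_eq_zero (by omega)).symm
  | succ t ih =>
    intro ℓ m
    classical
    have hmaps : ∀ x ∈ (Fintype.piFinset fun _ : Fin (t + 1 + 1) => Finset.range (m + 1)).filter
        (fun x => (∀ r : Fin (t + 1), x r.castSucc ≤ x r.succ) ∧ x 0 = 0 ∧
          x (Fin.last (t + 1)) = m),
        x (Fin.last t).castSucc ∈ Finset.range (m + 1) := by
      intro x hx
      rw [Finset.mem_filter] at hx
      exact (Fintype.mem_piFinset.mp hx.1) _
    rw [← Finset.sum_fiberwise_of_maps_to hmaps]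
    have hinner : ∀ k ∈ Finset.range (m + 1),
        (∑ x ∈ ((Fintype.piFinset fun _ : Fin (t + 1 + 1) => Finset.range (m + 1)).filter
            (fun x => (∀ r : Fin (t + 1), x r.castSucc ≤ x r.succ) ∧ x 0 = 0 ∧
              x (Fin.last (t + 1)) = m)).filter (fun x => x (Fin.last t).castSucc = k),
          ∏ r : Fin (t + 1),
            (PowerSeries.X : PowerSeries ℚ) ^ (ℓ r * x r.castSucc) *
              qbinom (x r.succ - x r.castSucc + ℓ r - 1) (x r.succ - x r.castSucc))
        = (PowerSeries.X : PowerSeries ℚ) ^ (ℓ (Fin.last t) * k) *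
            qbinom (k + ∑ r : Fin t, ℓ r.castSucc - 1) k *
            qbinom (m - k + ℓ (Fin.last t) - 1) (m - k) := by
      intro k hkr
      rw [Finset.mem_range] at hkr
      have hkm : k ≤ m := by omega
      have hterm : ∀ x ∈ ((Fintype.piFinset fun _ : Fin (t + 1 + 1) => Finset.range (m + 1)).filter
            (fun x => (∀ r : Fin (t + 1), x r.castSucc ≤ x r.succ) ∧ x 0 = 0 ∧
              x (Fin.last (t + 1)) = m)).filter (fun x => x (Fin.last t).castSucc = k),
          (∏ r : Fin (t + 1),
            (PowerSeries.X : PowerSeries ℚ) ^ (ℓ r * x r.castSucc) *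
              qbinom (x r.succ - x r.castSucc + ℓ r - 1) (x r.succ - x r.castSucc))
          = (∏ r : Fin t,
              (PowerSeries.X : PowerSeries ℚ) ^ (ℓ r.castSucc * x r.castSucc.castSucc) *
                qbinom (x r.castSucc.succ - x r.castSucc.castSucc + ℓ r.castSucc - 1)
                  (x r.castSucc.succ - x r.castSucc.castSucc)) *
            ((PowerSeries.X : PowerSeries ℚ) ^ (ℓ (Fin.last t) * k) *
              qbinom (m - k + ℓ (Fin.last t) - 1) (m - k)) := by
        intro x hx
        rw [Finset.mem_filter, Finset.mem_filter] at hx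
        obtain ⟨⟨hpi, hchain, h0, hlast⟩, hk⟩ := hx
        rw [Fin.prod_univ_castSucc]
        congr 1
        rw [Fin.succ_last, hlast, hk]
      rw [Finset.sum_congr rfl hterm, ← Finset.sum_mul]
      have hbij : (∑ x ∈ ((Fintype.piFinset fun _ : Fin (t + 1 + 1) => Finset.range (m + 1)).filter
            (fun x => (∀ r : Fin (t + 1), x r.castSucc ≤ x r.succ) ∧ x 0 = 0 ∧
              x (Fin.last (t + 1)) = m)).filter (fun x => x (Fin.last t).castSucc = k),
          ∏ r : Fin t,
            (PowerSeries.X : PowerSeries ℚ) ^ (ℓ r.castSucc * x r.castSucc.castSucc) *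
              qbinom (x r.castSucc.succ - x r.castSucc.castSucc + ℓ r.castSucc - 1)
                (x r.castSucc.succ - x r.castSucc.castSucc))
          = ∑ y ∈ (Fintype.piFinset fun _ : Fin (t + 1) => Finset.range (k + 1)).filter
              (fun y => (∀ r : Fin t, y r.castSucc ≤ y r.succ) ∧ y 0 = 0 ∧ y (Fin.last t) = k),
            ∏ r : Fin t,
              (PowerSeries.X : PowerSeries ℚ) ^ ((fun r => ℓ r.castSucc) r * y r.castSucc) *
                qbinom (y r.succ - y r.castSucc + (fun r => ℓ r.castSucc) r - 1)
                  (y r.succ - y r.castSucc) := by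
        apply Finset.sum_nbij' (fun x => Fin.init x) (fun y => Fin.snoc y m)
        · -- maps forward
          intro x hx
          rw [Finset.mem_filter, Finset.mem_filter] at hx
          obtain ⟨⟨hpi, hchain, h0, hlast⟩, hk⟩ := hx
          have hmono : Monotone x := Fin.monotone_iff_le_succ.mpr hchain
          rw [Finset.mem_filter]
          refine ⟨Fintype.mem_piFinset.mpr fun i => ?_, fun r => ?_, ?_, ?_⟩
          · rw [Finset.mem_range]
            have : x i.castSucc ≤ x (Fin.last t).castSucc :=
              hmono (Fin.castSucc_le_castSucc_iff.mpr (Fin.le_last i))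
            show x i.castSucc < k + 1
            omega
          · show x r.castSucc.castSucc ≤ x r.succ.castSucc
            rw [← Fin.succ_castSucc]
            exact hchain r.castSucc
          · show x (Fin.castSucc 0) = 0
            rw [Fin.castSucc_zero]; exact h0
          · exact hk
        · -- maps backward
          intro y hy
          rw [Finset.mem_filter] at hy
          obtain ⟨hpi, hchain, h0, hlast⟩ := hy
          have hpi' := Fintype.mem_piFinset.mp hpi
          rw [Finset.mem_filter, Finset.mem_filter]
          refine ⟨⟨Fintype.mem_piFinset.mpr fun i => ?_, fun r => ?_, ?_, ?_⟩, ?_⟩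
          · rw [Finset.mem_range]
            refine Fin.lastCases ?_ (fun j => ?_) i
            · rw [Fin.snoc_last]; omega
            · rw [Fin.snoc_castSucc]
              have := hpi' j
              rw [Finset.mem_range] at this
              omega
          · refine Fin.lastCases ?_ (fun s => ?_) r
            · rw [Fin.succ_last, Fin.snoc_last, Fin.snoc_castSucc, hlast]
              exact hkm
            · rw [Fin.succ_castSucc, Fin.snoc_castSucc, Fin.snoc_castSucc]
              exact hchain s
          · rw [show (0 : Fin (t + 1 + 1)) = (0 : Fin (t + 1)).castSucc from
              (Fin.castSucc_zero).symm, Fin.snoc_castSucc]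
            exact h0
          · rw [Fin.snoc_last]
          · rw [Fin.snoc_castSucc]
            exact hlast
        · -- left inverse
          intro x hx
          rw [Finset.mem_filter, Finset.mem_filter] at hx
          obtain ⟨⟨-, -, -, hlast⟩, -⟩ := hx
          rw [← hlast]
          exact Fin.snoc_init_self x
        · -- right inverse
          intro y _
          exact Fin.init_snoc (n := t + 1) (α := fun _ => ℕ) m y
        · -- values agree
          intro x hx
          refine Finset.prod_congr rfl fun r _ => ?_
          show _ = (PowerSeries.X : PowerSeries ℚ) ^ (ℓ r.castSucc * x r.castSucc.castSucc) *
            qbinom (x r.succ.castSucc - x r.castSucc.castSucc + ℓ r.castSucc - 1)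
              (x r.succ.castSucc - x r.castSucc.castSucc)
          rw [← Fin.succ_castSucc]
      rw [hbij, ih (fun r => ℓ r.castSucc) k]
      ring
    rw [Finset.sum_congr rfl hinner,
      qvandermonde (∑ r : Fin t, ℓ r.castSucc) (ℓ (Fin.last t)) m,
      Fin.sum_univ_castSucc (f := ℓ), ← add_assoc]

/-- Chain decomposition of a Gaussian binomial:
`q^m·qbinom(m+ℓ_1+⋯+ℓ_t−1, m) = q^m·Σ_{0=x_0≤x_1≤⋯≤x_t=m} Π_{r=1}^{t}
q^{ℓ_r x_{r−1}}·qbinom(x_r−x_{r−1}+ℓ_r−1, x_r−x_{r−1})`. -/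
theorem gaussian_binomial_chain_decomposition (m t : ℕ) (ℓ : Fin t → ℕ) :
    (PowerSeries.X : PowerSeries ℚ) ^ m * qbinom (m + ∑ r, ℓ r - 1) m =
      (PowerSeries.X : PowerSeries ℚ) ^ m *
        ∑ x ∈ (Fintype.piFinset fun _ : Fin (t + 1) => Finset.range (m + 1)).filter
            (fun x => (∀ r : Fin t, x r.castSucc ≤ x r.succ) ∧ x 0 = 0 ∧ x (Fin.last t) = m),
          ∏ r : Fin t,
            (PowerSeries.X : PowerSeries ℚ) ^ (ℓ r * x r.castSucc) *
              qbinom (x r.succ - x r.castSucc + ℓ r - 1) (x r.succ - x r.castSucc) := by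
  rw [chain_sum t ℓ m]
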